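/- For M = (0,1) the open interval, the locally finite simplicial volume is infinite: ‖M‖_lf = +∞; whereas for V = [0,1], the relative simplicial volume satisfies ‖V,∂V‖ = 1. -/

import Mathlib

open scoped ENNReal BigOperators

noncomputable section

namespace SimplexCategory

/-- The topological simplex associated to `x : SimplexCategory`
(the definition removed from Mathlib, restated with its old meaning). -/
def toTopObj (x : SimplexCategory) : Set (Fin (x.len + 1) → NNReal) :=
  { f | ∑ i, f i = 1 }

/-- A morphism in `SimplexCategory` induces a map on the associated topological spaces. -/
def toTopMap {x y : SimplexCategory} (f : x ⟶ y) (g : x.toTopObj) : y.toTopObj :=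
  ⟨fun i => ∑ j ∈ Finset.univ.filter (fun j => f.toOrderHom j = i), (g : Fin (x.len + 1) → NNReal) j, by
    have hg : ∑ j, (g : Fin (x.len + 1) → NNReal) j = 1 := g.2
    show (∑ i, ∑ j ∈ Finset.univ.filter (fun j => f.toOrderHom j = i),
      (g : Fin (x.len + 1) → NNReal) j) = 1
    rw [Finset.sum_fiberwise]
    exact hg⟩

theorem continuous_toTopMap {x y : SimplexCategory} (f : x ⟶ y) : Continuous (toTopMap f) := by
  refine Continuous.subtype_mk (continuous_pi fun i => ?_) _
  exact continuous_finset_sum _ (fun j _ => (continuous_apply _).comp continuous_subtype_val)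

end SimplexCategory

/-- A singular `q`-simplex in a topological space `M`: a continuous map from the
standard topological `q`-simplex to `M`. -/
abbrev SingSimplex (M : Type) [TopologicalSpace M] (q : ℕ) : Type :=
  C(SimplexCategory.toTopObj (SimplexCategory.mk q), M)

/-- The `i`-th face of a singular `(q+1)`-simplex. -/
def sFace {M : Type} [TopologicalSpace M] {q : ℕ} (i : Fin (q + 2))
    (σ : SingSimplex M (q + 1)) : SingSimplex M q :=
  σ.comp ⟨SimplexCategory.toTopMap (SimplexCategory.δ i),
    SimplexCategory.continuous_toTopMap _⟩

/-- The homogeneous coboundary of a (function-valued) singular cochain. -/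
def cobd {M : Type} [TopologicalSpace M] {q : ℕ} (f : SingSimplex M q → ℝ) :
    SingSimplex M (q + 1) → ℝ :=
  fun σ => ∑ i : Fin (q + 2), (-1 : ℝ) ^ (i : ℕ) * f (sFace i σ)

/-- The sup-norm of a cochain (possibly infinite). -/
def supNorm {α : Type*} (f : α → ℝ) : ℝ≥0∞ :=
  ⨆ x : α, (‖f x‖₊ : ℝ≥0∞)

/-- The boundary of a finite singular chain. -/
def chainBd {M : Type} [TopologicalSpace M] {q : ℕ}
    (c : SingSimplex M (q + 1) →₀ ℝ) : SingSimplex M q →₀ ℝ :=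
  c.sum fun σ a => ∑ i : Fin (q + 2), Finsupp.single (sFace i σ) ((-1 : ℝ) ^ (i : ℕ) * a)

/-- Evaluation of a cochain on a finite chain. -/
def evalChain {M : Type} [TopologicalSpace M] {q : ℕ}
    (f : SingSimplex M q → ℝ) (c : SingSimplex M q →₀ ℝ) : ℝ :=
  c.sum fun σ a => a * f σ

/-- The `ℓ¹`-norm of a finite chain. -/
def l1Fin {α : Type*} (c : α →₀ ℝ) : ℝ≥0∞ :=
  ∑ σ ∈ c.support, (‖c σ‖₊ : ℝ≥0∞)
/-- The seminorm `‖b‖_Φ = sup_{σ ∈ Φ} |b σ|` associated to a family `Φ` of simplices. -/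
def phiNorm {α : Type*} (Φ : Set α) (b : α → ℝ) : ℝ≥0∞ :=
  ⨆ σ ∈ Φ, (‖b σ‖₊ : ℝ≥0∞)

/-- A family of singular simplices is locally finite if every compact subset of `M`
meets the image of only finitely many of its members. -/
def LocFinFam {M : Type} [TopologicalSpace M] {q : ℕ} (Φ : Set (SingSimplex M q)) : Prop :=
  ∀ K : Set M, IsCompact K → {σ ∈ Φ | (Set.range σ ∩ K).Nonempty}.Finite

/-- A cochain has compact support if there is a compact `K ⊆ M` such that the cochain
vanishes on every simplex whose image misses `K`. -/
def HasCompactSupp {M : Type} [TopologicalSpace M] {q : ℕ} (f : SingSimplex M q → ℝ) : Prop :=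
  ∃ K : Set M, IsCompact K ∧ ∀ σ : SingSimplex M q, Set.range σ ∩ K = ∅ → f σ = 0
/-- The `ℓ¹`-norm of a (possibly infinite, e.g. locally finite) chain given by a
coefficient function. -/
def l1Lf {α : Type*} (z : α → ℝ) : ℝ≥0∞ :=
  ∑' σ : α, (‖z σ‖₊ : ℝ≥0∞)

/-- Evaluation of a cochain on a locally finite chain. -/
def lfEval {M : Type} [TopologicalSpace M] {q : ℕ}
    (f : SingSimplex M q → ℝ) (z : SingSimplex M q → ℝ) : ℝ :=
  ∑ᶠ σ : SingSimplex M q, z σ * f σ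

open Classical in
/-- The boundary of a locally finite chain. -/
def lfBd {M : Type} [TopologicalSpace M] {q : ℕ} (w : SingSimplex M (q + 1) → ℝ) :
    SingSimplex M q → ℝ :=
  fun τ => ∑ᶠ σ : SingSimplex M (q + 1),
    w σ * ∑ i : Fin (q + 2), (-1 : ℝ) ^ (i : ℕ) * (if sFace i σ = τ then 1 else 0)

/-- The set of compactly supported cocycle representatives of the compact-support
cohomology class of a cocycle `b` (in degree `q+1`). -/
def cptReps {M : Type} [TopologicalSpace M] (q : ℕ) (b : SingSimplex M (q + 1) → ℝ) :
    Set (SingSimplex M (q + 1) → ℝ) :=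
  {b' | HasCompactSupp b' ∧ ∃ g : SingSimplex M q → ℝ, HasCompactSupp g ∧ b' = b + cobd g}

/-- Gromov's seminorm `‖β‖^∞` of the compact-support cohomology class of a cocycle `b`:
the sup over locally finite families `Φ` of the inf over representatives of `‖·‖_Φ`. -/
def gromovNorm {M : Type} [TopologicalSpace M] (q : ℕ) (b : SingSimplex M (q + 1) → ℝ) :
    ℝ≥0∞ :=
  ⨆ Φ : Set (SingSimplex M (q + 1)), ⨆ _ : LocFinFam Φ, ⨅ b' ∈ cptReps q b, phiNorm Φ b'

end

noncomputable section

open Classical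

/-- The `k`-th vertex of the standard topological `n`-simplex. -/
def stdVertex {n : ℕ} (k : Fin (n + 1)) :
    SimplexCategory.toTopObj (SimplexCategory.mk n) :=
  ⟨fun i => if i = k then 1 else 0, by
    simp [SimplexCategory.toTopObj]⟩

/-- The open unit interval `(0,1)`. -/
abbrev Ioo01 : Type := Set.Ioo (0 : ℝ) 1

/-- The closed unit interval `[0,1]`. -/
abbrev Icc01 : Type := Set.Icc (0 : ℝ) 1

/-- A compactly supported singular `1`-cocycle on `(0,1)` representing the generator
`ω_M` of `H¹_cpct((0,1),ℝ)` dual to the fundamental class: the coboundary of the step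
function at `1/2`. -/
def stepCocycle : SingSimplex Ioo01 1 → ℝ :=
  fun σ =>
    (if (1 / 2 : ℝ) ≤ (σ (stdVertex 1) : ℝ) then (1 : ℝ) else 0) -
      (if (1 / 2 : ℝ) ≤ (σ (stdVertex 0) : ℝ) then (1 : ℝ) else 0)

/-- The set of locally finite fundamental cycles of `(0,1)`: locally finite `1`-cycles
pairing to `1` with the generator of `H¹_cpct((0,1),ℝ) ≅ ℝ`. -/
def FundIoo : Set (SingSimplex Ioo01 1 → ℝ) :=
  {z | LocFinFam {σ | z σ ≠ 0} ∧ lfBd z = 0 ∧ lfEval stepCocycle z = 1}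

/-- The point `0` of `[0,1]`. -/
def pt0 : Icc01 := ⟨0, by norm_num⟩

/-- The point `1` of `[0,1]`. -/
def pt1 : Icc01 := ⟨1, by norm_num⟩

/-- The set of relative fundamental cycles of `([0,1],{0,1})`: finite `1`-chains whose
boundary is supported on `{0,1}` with total coefficient `1` at the point `1` and `-1` at
the point `0`. -/
def FundIcc : Set (SingSimplex Icc01 1 →₀ ℝ) :=
  {c | (∀ σ ∈ (chainBd c).support, σ (stdVertex 0) = pt0 ∨ σ (stdVertex 0) = pt1) ∧
    (∑ σ ∈ (chainBd c).support,
      if σ (stdVertex 0) = pt1 then chainBd c σ else 0) = 1 ∧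
    (∑ σ ∈ (chainBd c).support,
      if σ (stdVertex 0) = pt0 then chainBd c σ else 0) = -1}

end

section Aux
open Classical

lemma toTopObj_zero_eq (p : SimplexCategory.toTopObj (SimplexCategory.mk 0)) :
    p = stdVertex 0 := by
  apply Subtype.ext
  funext i
  have h : ∑ j, p.1 j = 1 := p.2
  have hi : i = (0 : Fin 1) := Subsingleton.elim (α := Fin 1) i 0
  subst hi
  have h' : p.1 (0 : Fin 1) = 1 := by
    rw [← h]
    exact (Finset.sum_eq_single_of_mem _ (Finset.mem_univ _)
      (fun b _ hb => absurd (Subsingleton.elim (α := Fin 1) b 0) hb)).symm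
  rw [h']
  simp [stdVertex]

lemma toTopMap_stdVertex {n m : ℕ} (f : SimplexCategory.mk n ⟶ SimplexCategory.mk m)
    (k : Fin (n + 1)) :
    SimplexCategory.toTopMap f (stdVertex k) = stdVertex (f.toOrderHom k) := by
  apply Subtype.ext
  funext j
  show ∑ l ∈ Finset.univ.filter (fun l => f.toOrderHom l = j), (stdVertex k).1 l = _
  simp only [stdVertex]
  rw [Finset.sum_ite_eq' (Finset.univ.filter (fun l => f.toOrderHom l = j)) k (fun _ => (1:NNReal))]
  simp only [Finset.mem_filter, Finset.mem_univ, true_and]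
  by_cases h : f.toOrderHom k = j
  · simp [h]
  · simp [h, Ne.symm h]

lemma sFace_vertex {M : Type} [TopologicalSpace M] (σ : SingSimplex M 1) (i : Fin 2) :
    sFace i σ (stdVertex 0) = σ (stdVertex (if i = 0 then 1 else 0)) := by
  show σ (SimplexCategory.toTopMap (SimplexCategory.δ i) (stdVertex 0)) = _
  rw [toTopMap_stdVertex]
  congr 1
  congr 1
  fin_cases i <;> rfl

end Aux
section Aux2
open Classical
open scoped NNReal

lemma fin2cases (j : Fin 2) : j = 0 ∨ j = 1 := by omega

instance compactToTopObj (n : ℕ) :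
    CompactSpace (SimplexCategory.toTopObj (SimplexCategory.mk n)) := by
  rw [← isCompact_iff_compactSpace]
  apply IsCompact.of_isClosed_subset
    (isCompact_univ_pi (fun _ : Fin (n+1) => isCompact_Icc (a := (0:NNReal)) (b := 1)))
  · exact isClosed_eq (by continuity) continuous_const
  · intro f hf
    intro i _
    constructor
    · exact zero_le
    · rw [← hf]
      exact Finset.single_le_sum (fun j _ => zero_le) (Finset.mem_univ i)

/-- The straight path in the 1-simplex. -/
noncomputable def pathΔ : Icc01 → SimplexCategory.toTopObj (SimplexCategory.mk 1) :=
  fun s => ⟨fun j => if j = (0 : Fin 2) then Real.toNNReal (1 - s) else Real.toNNReal s, by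
    show ∑ j : Fin 2, _ = 1
    rw [Fin.sum_univ_two]
    simp only [if_pos rfl, if_neg (by decide : (1:Fin 2) ≠ 0)]
    have h0 := s.2.1
    have h1 := s.2.2
    apply NNReal.coe_injective
    push_cast [Real.coe_toNNReal _ (by linarith : (0:ℝ) ≤ 1 - s), Real.coe_toNNReal _ h0]
    ring⟩

lemma continuous_pathΔ : Continuous pathΔ := by
  apply Continuous.subtype_mk
  apply continuous_pi
  intro j
  by_cases hj : j = (0 : Fin 2)
  · simp [pathΔ, hj]
    exact continuous_real_toNNReal.comp (continuous_const.sub continuous_subtype_val)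
  · simp [pathΔ, hj]
    exact continuous_real_toNNReal.comp
      (continuous_subtype_val (p := fun x : ℝ => x ∈ Set.Icc (0:ℝ) 1))

lemma pathΔ_zero : pathΔ ⟨0, by norm_num⟩ = stdVertex 0 := by
  apply Subtype.ext
  funext j
  show (if j = (0:Fin 2) then Real.toNNReal (1 - (0:ℝ)) else Real.toNNReal (0:ℝ)) = _
  rcases fin2cases j with h | h <;> subst h <;>
    simp [stdVertex, Real.toNNReal_one, Real.toNNReal_zero]

lemma pathΔ_one : pathΔ ⟨1, by norm_num⟩ = stdVertex 1 := by
  apply Subtype.ext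
  funext j
  show (if j = (0:Fin 2) then Real.toNNReal (1 - (1:ℝ)) else Real.toNNReal (1:ℝ)) = _
  rcases fin2cases j with h | h <;> subst h <;>
    simp [stdVertex, (by decide : ¬ (0:Fin 2) = 1), (by decide : ¬ (1:Fin 2) = 0)]

lemma surjective_pathΔ : Function.Surjective pathΔ := by
  intro p
  have hsum : p.1 (0:Fin 2) + p.1 (1:Fin 2) = 1 := by
    have h : ∑ j : Fin 2, p.1 j = 1 := p.2
    rwa [Fin.sum_univ_two] at h
  have h1 : ((p.1 (1:Fin 2) : ℝ≥0) : ℝ) ∈ Set.Icc (0:ℝ) 1 := by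
    constructor
    · exact (p.1 (1:Fin 2)).2
    · exact_mod_cast le_of_le_of_eq (le_add_self) hsum
  refine ⟨⟨(p.1 (1:Fin 2) : ℝ≥0), h1⟩, ?_⟩
  apply Subtype.ext
  funext j
  show (if j = (0:Fin 2) then Real.toNNReal (1 - (p.1 (1:Fin 2):ℝ)) else
    Real.toNNReal ((p.1 (1:Fin 2):ℝ))) = p.1 j
  have hc : ((p.1 (0:Fin 2)):ℝ) + ((p.1 (1:Fin 2)):ℝ) = 1 := by exact_mod_cast hsum
  rcases fin2cases j with h | h <;> subst h
  · rw [if_pos rfl]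
    apply NNReal.coe_injective
    have hp0 : (0:ℝ) ≤ (p.1 (0:Fin 2):ℝ) := (p.1 (0:Fin 2)).2
    rw [Real.coe_toNNReal _ (by linarith : (0:ℝ) ≤ 1 - ((p.1 (1:Fin 2)):ℝ))]
    linarith
  · rw [if_neg (by decide : (1:Fin 2) ≠ 0)]
    exact Real.toNNReal_coe

instance preconnToTopObj1 :
    PreconnectedSpace (SimplexCategory.toTopObj (SimplexCategory.mk 1)) := by
  have : PreconnectedSpace Icc01 := Subtype.preconnectedSpace isPreconnected_Icc
  exact ⟨Set.range_eq_univ.mpr surjective_pathΔ ▸ isPreconnected_range continuous_pathΔ⟩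

end Aux2
section Aux3
open Classical
open scoped NNReal

lemma range_sFace_subset {M : Type} [TopologicalSpace M] {q : ℕ} (i : Fin (q+2))
    (σ : SingSimplex M (q+1)) : Set.range (sFace i σ) ⊆ Set.range σ := by
  rintro _ ⟨x, rfl⟩
  exact ⟨_, rfl⟩

lemma range_zero_simplex {M : Type} [TopologicalSpace M] (τ : SingSimplex M 0) :
    Set.range τ = {τ (stdVertex 0)} := by
  ext y
  constructor
  · rintro ⟨x, rfl⟩
    rw [toTopObj_zero_eq x]
    rfl
  · rintro rfl
    exact ⟨_, rfl⟩

lemma mem_range_of_straddle (σ : SingSimplex Ioo01 1) {t : ℝ} (h0 : 0 < t) (h1 : t < 1)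
    (hab : t ∈ Set.uIcc ((σ (stdVertex 0) : ℝ)) ((σ (stdVertex 1) : ℝ))) :
    (⟨t, h0, h1⟩ : Ioo01) ∈ Set.range σ := by
  have hf : Continuous fun p : SimplexCategory.toTopObj (SimplexCategory.mk 1) =>
      ((σ p : Ioo01) : ℝ) := continuous_subtype_val.comp σ.continuous
  rcases Set.mem_uIcc.mp hab with ⟨ha, hb⟩ | ⟨ha, hb⟩
  · obtain ⟨x, hx⟩ := intermediate_value_univ (stdVertex 0) (stdVertex 1) hf ⟨ha, hb⟩
    exact ⟨x, Subtype.ext hx⟩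
  · obtain ⟨x, hx⟩ := intermediate_value_univ (stdVertex 1) (stdVertex 0) hf ⟨ha, hb⟩
    exact ⟨x, Subtype.ext hx⟩

/-- The step cocycle with jump at `t`. -/
noncomputable def stepAt (t : ℝ) : SingSimplex Ioo01 1 → ℝ := fun σ =>
  (if t ≤ (σ (stdVertex 1) : ℝ) then (1:ℝ) else 0) -
    (if t ≤ (σ (stdVertex 0) : ℝ) then (1:ℝ) else 0)

lemma stepCocycle_eq : stepCocycle = stepAt (1/2) := rfl

lemma abs_stepAt_le (t : ℝ) (σ : SingSimplex Ioo01 1) : |stepAt t σ| ≤ 1 := by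
  unfold stepAt
  split <;> split <;> norm_num

lemma stepAt_mem_range {t : ℝ} (h0 : 0 < t) (h1 : t < 1) (σ : SingSimplex Ioo01 1)
    (h : stepAt t σ ≠ 0) : (⟨t, h0, h1⟩ : Ioo01) ∈ Set.range σ := by
  apply mem_range_of_straddle σ h0 h1
  unfold stepAt at h
  rcases le_or_gt t ((σ (stdVertex 1) : ℝ)) with hb | hb <;>
    rcases le_or_gt t ((σ (stdVertex 0) : ℝ)) with ha | ha
  · rw [if_pos hb, if_pos ha] at h; norm_num at h
  · exact Set.mem_uIcc.mpr (Or.inl ⟨ha.le, hb⟩)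
  · rw [if_neg (not_le.mpr hb), if_pos ha] at h
    exact Set.mem_uIcc.mpr (Or.inr ⟨hb.le, ha⟩)
  · rw [if_neg (not_le.mpr hb), if_neg (not_le.mpr ha)] at h; norm_num at h

end Aux3
section Aux4
open Classical
open scoped NNReal

variable {M : Type} [TopologicalSpace M] {q : ℕ}

lemma lfEval_cobd_eq_zero {z : SingSimplex M (q+1) → ℝ} {g : SingSimplex M q → ℝ}
    (hlf : LocFinFam {σ | z σ ≠ 0}) (hbd : lfBd z = 0) (hg : HasCompactSupp g) :
    lfEval (cobd g) z = 0 := by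
  classical
  obtain ⟨K, hK, hgK⟩ := hg
  have hgne : ∀ τ, g τ ≠ 0 → (Set.range τ ∩ K).Nonempty := by
    intro τ hτ
    by_contra h
    exact hτ (hgK _ (Set.not_nonempty_iff_eq_empty.mp h))
  have hT : {σ : SingSimplex M (q+1) | z σ ≠ 0 ∧ (Set.range σ ∩ K).Nonempty}.Finite :=
    hlf K hK
  set T : Finset (SingSimplex M (q+1)) := hT.toFinset with hTdef
  have hmemT : ∀ {σ}, σ ∈ T ↔ z σ ≠ 0 ∧ (Set.range σ ∩ K).Nonempty := by
    intro σ; rw [hTdef, Set.Finite.mem_toFinset]; rfl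
  -- the inner bracket
  set B : SingSimplex M (q+1) → SingSimplex M q → ℝ := fun σ τ =>
    ∑ i : Fin (q+2), (-1:ℝ)^(i:ℕ) * (if sFace i σ = τ then 1 else 0) with hB
  have hBne : ∀ {σ τ}, B σ τ ≠ 0 → ∃ i, sFace i σ = τ := by
    intro σ τ h
    by_contra hall
    push_neg at hall
    exact h (by simp [hB, hall])
  -- support of summand of lfEval
  have hsupp : (Function.support fun σ => z σ * cobd g σ) ⊆ ↑T := by
    intro σ hσ
    rw [Function.mem_support] at hσ
    have hzσ : z σ ≠ 0 := fun h => hσ (by rw [h, zero_mul])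
    have hcσ : cobd g σ ≠ 0 := fun h => hσ (by rw [h, mul_zero])
    obtain ⟨i, hi⟩ : ∃ i, g (sFace i σ) ≠ 0 := by
      by_contra hall
      push_neg at hall
      exact hcσ (by simp [cobd, hall])
    obtain ⟨y, hy1, hy2⟩ := hgne _ hi
    exact Finset.mem_coe.mpr (hmemT.mpr ⟨hzσ, ⟨y, range_sFace_subset i σ hy1, hy2⟩⟩)
  have h1 : lfEval (cobd g) z = ∑ σ ∈ T, z σ * cobd g σ :=
    finsum_eq_sum_of_support_subset _ hsupp
  -- vertex finset
  set V : Finset (SingSimplex M q) :=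
    T.biUnion (fun σ => Finset.image (fun i => sFace i σ) Finset.univ) with hV
  have hmemV : ∀ {σ}, σ ∈ T → ∀ i : Fin (q+2), sFace i σ ∈ V := by
    intro σ hσ i
    exact Finset.mem_biUnion.mpr ⟨σ, hσ, Finset.mem_image.mpr ⟨i, Finset.mem_univ _, rfl⟩⟩
  -- step 2
  have h2 : ∀ σ ∈ T, z σ * cobd g σ = ∑ τ ∈ V, g τ * (z σ * B σ τ) := by
    intro σ hσ
    rw [hB, cobd]
    have : ∀ τ ∈ V, g τ * (z σ * ∑ i : Fin (q+2), (-1:ℝ)^(i:ℕ) * (if sFace i σ = τ then 1 else 0))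
        = ∑ i : Fin (q+2), (if sFace i σ = τ then g τ * (z σ * (-1:ℝ)^(i:ℕ)) else 0) := by
      intro τ _
      rw [Finset.mul_sum, Finset.mul_sum]
      refine Finset.sum_congr rfl fun i _ => ?_
      split <;> ring
    rw [Finset.sum_congr rfl this, Finset.sum_comm]
    rw [Finset.mul_sum]
    refine Finset.sum_congr rfl fun i _ => ?_
    rw [Finset.sum_ite_eq V (sFace i σ) (fun τ => g τ * (z σ * (-1:ℝ)^(i:ℕ))),
      if_pos (hmemV hσ i)]
    ring
  -- step 3
  have h3 : ∀ τ, g τ ≠ 0 → (∑ σ ∈ T, z σ * B σ τ) = 0 := by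
    intro τ hτ
    have hsupp' : (Function.support fun σ => z σ * B σ τ) ⊆ ↑T := by
      intro σ hσ
      rw [Function.mem_support] at hσ
      have hzσ : z σ ≠ 0 := fun h => hσ (by rw [h, zero_mul])
      have hBσ : B σ τ ≠ 0 := fun h => hσ (by rw [h, mul_zero])
      obtain ⟨i, hi⟩ := hBne hBσ
      obtain ⟨y, hy1, hy2⟩ := hgne _ hτ
      refine Finset.mem_coe.mpr (hmemT.mpr ⟨hzσ, ⟨y, ?_, hy2⟩⟩)
      exact range_sFace_subset i σ (hi ▸ hy1)
    have := congrFun hbd τ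
    rw [lfBd] at this
    rw [← finsum_eq_sum_of_support_subset _ hsupp']
    exact this
  rw [h1, Finset.sum_congr rfl h2, Finset.sum_comm]
  apply Finset.sum_eq_zero
  intro τ _
  by_cases hτ : g τ = 0
  · simp [hτ]
  · rw [← Finset.mul_sum, h3 τ hτ, mul_zero]

end Aux4
section Aux5
open Classical
open scoped NNReal

/-- Primitive whose coboundary is `stepAt t - stepCocycle`. -/
noncomputable def gdiff (t : ℝ) : SingSimplex Ioo01 0 → ℝ := fun τ =>
  (if t ≤ (τ (stdVertex 0) : ℝ) then (1:ℝ) else 0) -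
    (if (1/2:ℝ) ≤ (τ (stdVertex 0) : ℝ) then (1:ℝ) else 0)

lemma cobd_gdiff (t : ℝ) (σ : SingSimplex Ioo01 1) :
    cobd (gdiff t) σ = stepAt t σ - stepCocycle σ := by
  rw [cobd, Fin.sum_univ_two]
  simp only [gdiff]
  rw [sFace_vertex σ 0, sFace_vertex σ 1]
  simp only [if_pos rfl, if_neg (by decide : ¬ (1:Fin 2) = 0)]
  unfold stepAt stepCocycle
  norm_num
  ring

lemma hasCompactSupp_gdiff {t : ℝ} (h0 : 0 < t) (ht : t ≤ 1/2) :
    HasCompactSupp (gdiff t) := by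
  haveI : CompactSpace (Set.Icc t (1/2:ℝ)) :=
    isCompact_iff_compactSpace.mp isCompact_Icc
  refine ⟨Set.range (fun r : Set.Icc t (1/2:ℝ) =>
    (⟨r.1, ⟨lt_of_lt_of_le h0 r.2.1, lt_of_le_of_lt r.2.2 (by norm_num)⟩⟩ : Ioo01)),
    isCompact_range (Continuous.subtype_mk continuous_subtype_val _), ?_⟩
  intro τ hτ
  by_contra hne
  set v : ℝ := (τ (stdVertex 0) : ℝ) with hv
  have hcase : t ≤ v ∧ v < 1/2 := by
    unfold gdiff at hne
    rcases le_or_gt t v with h1 | h1 <;> rcases le_or_gt (1/2:ℝ) v with h2 | h2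
    · rw [if_pos h1, if_pos h2] at hne; norm_num at hne
    · exact ⟨h1, h2⟩
    · exact absurd h2 (not_le.mpr (lt_of_lt_of_le h1 ht))
    · rw [if_neg (not_le.mpr h1), if_neg (not_le.mpr h2)] at hne; norm_num at hne
  have hmem : τ (stdVertex 0) ∈ Set.range (fun r : Set.Icc t (1/2:ℝ) =>
      (⟨r.1, ⟨lt_of_lt_of_le h0 r.2.1, lt_of_le_of_lt r.2.2 (by norm_num)⟩⟩ : Ioo01)) :=
    ⟨⟨v, hcase.1, hcase.2.le⟩, Subtype.ext rfl⟩
  have : τ (stdVertex 0) ∈ Set.range τ ∩ _ := ⟨⟨stdVertex 0, rfl⟩, hmem⟩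
  rw [hτ] at this
  exact this

lemma support_mul_stepAt_finite {z : SingSimplex Ioo01 1 → ℝ}
    (hlf : LocFinFam {σ | z σ ≠ 0}) {t : ℝ} (h0 : 0 < t) (h1 : t < 1) :
    (Function.support fun σ => z σ * stepAt t σ).Finite := by
  apply Set.Finite.subset (hlf {(⟨t, h0, h1⟩ : Ioo01)} isCompact_singleton)
  intro σ hσ
  rw [Function.mem_support] at hσ
  have hz : z σ ≠ 0 := fun h => hσ (by rw [h, zero_mul])
  have hs : stepAt t σ ≠ 0 := fun h => hσ (by rw [h, mul_zero])
  exact ⟨hz, ⟨_, stepAt_mem_range h0 h1 σ hs, rfl⟩⟩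

lemma lfEval_stepAt_eq {z : SingSimplex Ioo01 1 → ℝ}
    (hlf : LocFinFam {σ | z σ ≠ 0}) (hbd : lfBd z = 0)
    (hev : lfEval stepCocycle z = 1) {t : ℝ} (h0 : 0 < t) (ht : t ≤ 1/2) :
    lfEval (stepAt t) z = 1 := by
  have h1 : t < 1 := lt_of_le_of_lt ht (by norm_num)
  have hfin1 := support_mul_stepAt_finite hlf h0 h1
  have hfin2 : (Function.support fun σ => z σ * stepCocycle σ).Finite := by
    rw [stepCocycle_eq]
    exact support_mul_stepAt_finite hlf (by norm_num) (by norm_num)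
  have hfin3 : (Function.support fun σ => z σ * cobd (gdiff t) σ).Finite := by
    apply Set.Finite.subset (hfin1.union hfin2)
    intro σ hσ
    rw [Function.mem_support] at hσ
    by_contra hnot
    simp only [Set.mem_union, Function.mem_support, not_or, not_not] at hnot
    apply hσ
    rw [cobd_gdiff, mul_sub, hnot.1, hnot.2, sub_zero]
  have key : lfEval (stepAt t) z = lfEval stepCocycle z + lfEval (cobd (gdiff t)) z := by
    have hpt : ∀ σ, z σ * stepAt t σ = z σ * stepCocycle σ + z σ * cobd (gdiff t) σ := by
      intro σ
      rw [cobd_gdiff]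
      ring
    calc lfEval (stepAt t) z
        = ∑ᶠ σ, (z σ * stepCocycle σ + z σ * cobd (gdiff t) σ) := finsum_congr hpt
      _ = _ := finsum_add_distrib hfin2 hfin3
  rw [key, hev, lfEval_cobd_eq_zero hlf hbd (hasCompactSupp_gdiff h0 ht), add_zero]

end Aux5
section Aux6
open Classical
open scoped NNReal

lemma part1 : (⨅ z ∈ FundIoo, l1Lf z) = ⊤ := by
  simp only [iInf_eq_top]
  intro z hz
  obtain ⟨hlf, hbd, hev⟩ := hz
  by_contra hne
  have hsum : Summable fun σ => ‖z σ‖ := by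
    have h := ENNReal.tsum_coe_ne_top_iff_summable.mp hne
    have := NNReal.summable_coe.mpr h
    simpa [coe_nnnorm] using this
  obtain ⟨S, hS⟩ := summable_iff_vanishing.mp hsum (Set.Iio (1:ℝ)) (Iio_mem_nhds one_pos)
  set C : Set Ioo01 := (⋃ σ ∈ S, Set.range σ) ∪ {(⟨1/2, by norm_num⟩ : Ioo01)} with hCdef
  have hC : IsCompact C :=
    (S.isCompact_biUnion (fun σ _ => isCompact_range σ.continuous)).union isCompact_singleton
  set A : Set ℝ := (fun x : Ioo01 => (x:ℝ)) '' C with hAdef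
  have hA : IsCompact A := hC.image continuous_subtype_val
  have hAne : A.Nonempty := ⟨1/2, ⟨⟨1/2, by norm_num⟩, Or.inr rfl, rfl⟩⟩
  obtain ⟨m, hmA, hmin⟩ := hA.exists_isLeast hAne
  obtain ⟨x, hxC, hxm⟩ := hmA
  have hm0 : 0 < m := hxm ▸ x.2.1
  have hm12 : m ≤ 1/2 := hmin ⟨⟨1/2, by norm_num⟩, Or.inr rfl, rfl⟩
  set t : ℝ := m/2 with htdef
  have h0 : 0 < t := by positivity
  have ht12 : t ≤ 1/2 := by linarith
  have h1 : t < 1 := by linarith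
  have htm : t < m := by linarith
  have hev' : lfEval (stepAt t) z = 1 := lfEval_stepAt_eq hlf hbd hev h0 ht12
  have hfin := support_mul_stepAt_finite hlf h0 h1
  set T : Finset (SingSimplex Ioo01 1) := hfin.toFinset with hTdef
  have h1eq : (1:ℝ) = ∑ σ ∈ T, z σ * stepAt t σ := by
    have h := finsum_eq_sum (fun σ => z σ * stepAt t σ) hfin
    rw [show (∑ᶠ σ, z σ * stepAt t σ) = lfEval (stepAt t) z from rfl, hev'] at h
    exact h
  have hstepS : ∀ σ ∈ S, stepAt t σ = 0 := by
    intro σ hσ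
    have hval : ∀ k : Fin 2, t ≤ ((σ (stdVertex k) : Ioo01) : ℝ) := by
      intro k
      have hmem : ((σ (stdVertex k) : Ioo01) : ℝ) ∈ A :=
        ⟨σ (stdVertex k), Or.inl (Set.mem_biUnion hσ ⟨stdVertex k, rfl⟩), rfl⟩
      exact le_of_lt (lt_of_lt_of_le htm (hmin hmem))
    unfold stepAt
    rw [if_pos (hval 1), if_pos (hval 0), sub_self]
  have hdisj : Disjoint T S := by
    rw [Finset.disjoint_left]
    intro σ hσT hσS
    have h := hfin.mem_toFinset.mp hσT
    rw [Function.mem_support] at h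
    exact h (by rw [hstepS σ hσS, mul_zero])
  have hlt : ∑ σ ∈ T, ‖z σ‖ < 1 := hS T hdisj
  have hge : (1:ℝ) ≤ ∑ σ ∈ T, ‖z σ‖ := by
    calc (1:ℝ) = |∑ σ ∈ T, z σ * stepAt t σ| := by rw [← h1eq]; norm_num
      _ ≤ ∑ σ ∈ T, |z σ * stepAt t σ| := Finset.abs_sum_le_sum_abs _ _
      _ ≤ ∑ σ ∈ T, ‖z σ‖ := by
          refine Finset.sum_le_sum fun σ _ => ?_
          rw [abs_mul, Real.norm_eq_abs]
          calc |z σ| * |stepAt t σ| ≤ |z σ| * 1 :=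
                mul_le_mul_of_nonneg_left (abs_stepAt_le t σ) (abs_nonneg _)
            _ = |z σ| := mul_one _
  linarith

end Aux6
section Aux7
open Classical
open scoped NNReal

lemma coord_mem_Icc (p : SimplexCategory.toTopObj (SimplexCategory.mk 1)) :
    ((p.1 (1:Fin 2) : ℝ≥0) : ℝ) ∈ Set.Icc (0:ℝ) 1 := by
  have hsum : p.1 (0:Fin 2) + p.1 (1:Fin 2) = 1 := by
    have h : ∑ j : Fin 2, p.1 j = 1 := p.2
    rwa [Fin.sum_univ_two] at h
  exact ⟨(p.1 (1:Fin 2)).2, by exact_mod_cast le_of_le_of_eq (le_add_self) hsum⟩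

/-- The affine 1-simplex filling `[0,1]`. -/
noncomputable def sigma0 : SingSimplex Icc01 1 :=
  ⟨fun p => ⟨((p.1 (1:Fin 2) : ℝ≥0) : ℝ), coord_mem_Icc p⟩, by
    apply Continuous.subtype_mk
    exact NNReal.continuous_coe.comp ((continuous_apply (1:Fin 2)).comp continuous_subtype_val)⟩

lemma sigma0_vertex1 : sigma0 (stdVertex 1) = pt1 := by
  apply Subtype.ext
  show ((stdVertex (1:Fin 2)).1 (1:Fin 2) : ℝ) = 1
  simp [stdVertex]

lemma sigma0_vertex0 : sigma0 (stdVertex 0) = pt0 := by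
  apply Subtype.ext
  show ((stdVertex (0:Fin 2)).1 (1:Fin 2) : ℝ) = 0
  simp [stdVertex, (by decide : ¬ (1:Fin 2) = 0)]

lemma tau1_vertex : sFace 0 sigma0 (stdVertex 0) = pt1 := by
  rw [sFace_vertex sigma0 0, if_pos rfl, sigma0_vertex1]

lemma tau0_vertex : sFace 1 sigma0 (stdVertex 0) = pt0 := by
  rw [sFace_vertex sigma0 1, if_neg (by decide : ¬ (1:Fin 2) = 0), sigma0_vertex0]

lemma pt1_ne_pt0 : pt1 ≠ pt0 := by
  intro h
  have : (1:ℝ) = 0 := congrArg Subtype.val h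
  norm_num at this

lemma tau_ne : sFace 0 sigma0 ≠ sFace 1 sigma0 := by
  intro h
  apply pt1_ne_pt0
  rw [← tau1_vertex, ← tau0_vertex, h]

lemma tau_ne' : ¬ sFace 1 sigma0 = sFace 0 sigma0 :=
  fun h => tau_ne h.symm

lemma chainBd_sigma0 : chainBd (Finsupp.single sigma0 (1:ℝ)) =
    Finsupp.single (sFace 0 sigma0) 1 + Finsupp.single (sFace 1 sigma0) (-1) := by
  rw [chainBd, Finsupp.sum_single_index (by simp)]
  rw [Fin.sum_univ_two]
  norm_num

lemma fundIcc_sigma0 : Finsupp.single sigma0 (1:ℝ) ∈ FundIcc := by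
  have hd := chainBd_sigma0
  have hsupp : (chainBd (Finsupp.single sigma0 (1:ℝ))).support = {sFace 0 sigma0, sFace 1 sigma0} := by
    rw [hd]
    rw [Finsupp.support_add_eq]
    · rw [Finsupp.support_single_ne_zero _ one_ne_zero,
        Finsupp.support_single_ne_zero _ (by norm_num : (-1:ℝ) ≠ 0)]
      rfl
    · rw [Finsupp.support_single_ne_zero _ one_ne_zero,
        Finsupp.support_single_ne_zero _ (by norm_num : (-1:ℝ) ≠ 0)]
      simp [Finset.disjoint_singleton, tau_ne, tau_ne']
  have happ1 : chainBd (Finsupp.single sigma0 (1:ℝ)) (sFace 0 sigma0) = 1 := by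
    rw [hd]
    simp [Finsupp.single_apply, tau_ne, tau_ne']
  have happ0 : chainBd (Finsupp.single sigma0 (1:ℝ)) (sFace 1 sigma0) = -1 := by
    rw [hd]
    simp [Finsupp.single_apply, tau_ne, tau_ne']
  have hnotmem : sFace 0 sigma0 ∉ ({sFace 1 sigma0} : Finset _) := by
    simp [tau_ne, tau_ne']
  refine ⟨?_, ?_, ?_⟩
  · intro σ hσ
    rw [hsupp] at hσ
    rcases Finset.mem_insert.mp hσ with h | h
    · subst h; exact Or.inr tau1_vertex
    · rw [Finset.mem_singleton] at h; subst h; exact Or.inl tau0_vertex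
  · rw [hsupp, Finset.sum_insert hnotmem, Finset.sum_singleton,
      if_pos tau1_vertex, if_neg (by rw [tau0_vertex]; exact fun h => pt1_ne_pt0 h.symm),
      happ1, add_zero]
  · rw [hsupp, Finset.sum_insert hnotmem, Finset.sum_singleton,
      if_neg (by rw [tau1_vertex]; exact pt1_ne_pt0), if_pos tau0_vertex,
      happ0, zero_add]

lemma l1Fin_sigma0 : l1Fin (Finsupp.single sigma0 (1:ℝ)) = 1 := by
  rw [l1Fin, Finsupp.support_single_ne_zero _ one_ne_zero, Finset.sum_singleton]
  simp

end Aux7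
section Aux8
open Classical
open scoped NNReal

lemma evalChain_chainBd {M : Type} [TopologicalSpace M] {q : ℕ}
    (g : SingSimplex M q → ℝ) (c : SingSimplex M (q+1) →₀ ℝ) :
    evalChain g (chainBd c) =
      ∑ σ ∈ c.support, c σ * ∑ i : Fin (q+2), (-1:ℝ)^(i:ℕ) * g (sFace i σ) := by
  have heval : ∀ d : SingSimplex M q →₀ ℝ,
      evalChain g d = Finsupp.linearCombination ℝ g d := fun d => rfl
  rw [heval, chainBd, map_finsuppSum, Finsupp.sum]
  refine Finset.sum_congr rfl fun σ _ => ?_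
  rw [map_sum, Finset.mul_sum]
  refine Finset.sum_congr rfl fun i _ => ?_
  rw [Finsupp.linearCombination_single, smul_eq_mul]
  ring

lemma part2_lower (c : SingSimplex Icc01 1 →₀ ℝ) (hc : c ∈ FundIcc) :
    (1:ℝ≥0∞) ≤ l1Fin c := by
  obtain ⟨hsupp, h1, h0⟩ := hc
  set g : SingSimplex Icc01 0 → ℝ := fun τ => if τ (stdVertex 0) = pt1 then 1 else 0 with hg
  have hev : evalChain g (chainBd c) = 1 := by
    rw [evalChain, Finsupp.sum]
    have hcg : ∀ σ ∈ (chainBd c).support,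
        (chainBd c) σ * g σ = (if σ (stdVertex 0) = pt1 then (chainBd c) σ else 0) := by
      intro σ _
      by_cases h : σ (stdVertex 0) = pt1 <;> simp [hg, h]
    rw [Finset.sum_congr rfl hcg, h1]
  have hbound : (1:ℝ) ≤ ∑ σ ∈ c.support, |c σ| := by
    calc (1:ℝ) = |evalChain g (chainBd c)| := by rw [hev]; norm_num
      _ = |∑ σ ∈ c.support, c σ * ∑ i : Fin 2, (-1:ℝ)^(i:ℕ) * g (sFace i σ)| := by
          rw [evalChain_chainBd]
      _ ≤ ∑ σ ∈ c.support, |c σ * ∑ i : Fin 2, (-1:ℝ)^(i:ℕ) * g (sFace i σ)| :=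
          Finset.abs_sum_le_sum_abs _ _
      _ ≤ ∑ σ ∈ c.support, |c σ| := by
          refine Finset.sum_le_sum fun σ _ => ?_
          rw [abs_mul]
          have hB : |∑ i : Fin 2, (-1:ℝ)^(i:ℕ) * g (sFace i σ)| ≤ 1 := by
            rw [Fin.sum_univ_two]
            norm_num [hg]
            split <;> split <;> norm_num
          calc |c σ| * |∑ i : Fin 2, (-1:ℝ)^(i:ℕ) * g (sFace i σ)| ≤ |c σ| * 1 :=
                mul_le_mul_of_nonneg_left hB (abs_nonneg _)
            _ = |c σ| := mul_one _
  rw [l1Fin, ← ENNReal.coe_finset_sum, show (1:ℝ≥0∞) = ((1:ℝ≥0):ℝ≥0∞) from rfl,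
    ENNReal.coe_le_coe, ← NNReal.coe_le_coe, NNReal.coe_sum, NNReal.coe_one]
  simpa [coe_nnnorm, Real.norm_eq_abs] using hbound

lemma part2 : (⨅ c ∈ FundIcc, l1Fin c) = 1 := by
  apply le_antisymm
  · calc (⨅ c ∈ FundIcc, l1Fin c) ≤ l1Fin (Finsupp.single sigma0 (1:ℝ)) :=
        iInf₂_le _ fundIcc_sigma0
      _ = 1 := l1Fin_sigma0
  · exact le_iInf₂ part2_lower

end Aux8

/-- for `M = (0,1)` the locally finite simplicial volume is infinite,
`‖M‖_lf = +∞`, whereas for `V = [0,1]` the relative simplicial volume is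
`‖V,∂V‖ = 1`. -/
theorem interval_simplicial_volumes :
    (⨅ z ∈ FundIoo, l1Lf z) = ⊤ ∧ (⨅ c ∈ FundIcc, l1Fin c) = 1 := by
  exact ⟨part1, part2⟩
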